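/- If σ' and t are real numbers with 1/2 < σ' < 1 such that η(σ' + it) = 0, then the double partial sums S_N = ∑_{1 ≤ k < k' ≤ N} (-1)^{k+k'} · cos(t·log(k/k')) / (k^{σ'} · k'^{σ'}) converge as N → ∞ to -C(σ')/2, where C(σ') = ∑_{k=1}^∞ 1/k^{2σ'} is the (finite) value of the convergent series. -/

import Mathlib

open Filter Finset

private lemma re_term (σ' t : ℝ) (k k' : ℕ) (hk : 1 ≤ k) (hk' : 1 ≤ k') :
    (((-1:ℂ)^(k-1) / (k:ℂ) ^ ((σ' : ℂ) + (t : ℂ) * Complex.I)) *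
      (starRingEnd ℂ) ((-1:ℂ)^(k'-1) / (k':ℂ) ^ ((σ' : ℂ) + (t : ℂ) * Complex.I))).re
    = (-1:ℝ)^(k+k') * Real.cos (t * Real.log ((k:ℝ)/(k':ℝ))) / ((k:ℝ)^σ' * (k':ℝ)^σ') := by
  obtain ⟨a, rfl⟩ := Nat.exists_eq_add_of_le hk
  obtain ⟨b, rfl⟩ := Nat.exists_eq_add_of_le hk'
  set s : ℂ := (σ' : ℂ) + (t : ℂ) * Complex.I with hs
  have hk0 : ((1 + a : ℕ) : ℂ) ≠ 0 := Nat.cast_ne_zero.mpr (by omega)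
  have hk'0 : ((1 + b : ℕ) : ℂ) ≠ 0 := Nat.cast_ne_zero.mpr (by omega)
  have hpos : (0:ℝ) < (1 + a : ℕ) := by positivity
  have hpos' : (0:ℝ) < (1 + b : ℕ) := by positivity
  have hcpow : ∀ (n : ℕ), (n:ℂ) ≠ 0 → (n:ℂ) ^ s = Complex.exp (s * Real.log n) := by
    intro n hn
    rw [Complex.cpow_def_of_ne_zero hn, Complex.natCast_log, mul_comm]
  rw [hcpow _ hk0, hcpow _ hk'0]
  rw [map_div₀, map_pow, ← Complex.exp_conj]
  have hconj : (starRingEnd ℂ) (s * Real.log (1 + b : ℕ))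
      = ((σ' : ℂ) - (t : ℂ) * Complex.I) * Real.log (1 + b : ℕ) := by
    simp [hs, map_mul, Complex.conj_ofReal, sub_eq_add_neg]
  rw [hconj]
  simp only [map_neg, map_one]
  rw [div_mul_div_comm, ← pow_add, ← Complex.exp_add]
  rw [div_eq_mul_inv, ← Complex.exp_neg]
  have hsign : ((-1:ℂ) ^ (1 + a - 1 + (1 + b - 1)) : ℂ) = (((-1:ℝ) ^ (1 + a + (1 + b)) : ℝ) : ℂ) := by
    simp only [Nat.add_sub_cancel_left]
    rw [show 1 + a + (1 + b) = (a + b) + 2 by ring, pow_add]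
    push_cast
    ring
  rw [hsign, Complex.re_ofReal_mul, Complex.exp_re]
  set La : ℝ := Real.log (1 + a : ℕ)
  set Lb : ℝ := Real.log (1 + b : ℕ)
  have hre : (-(s * La + ((σ' : ℂ) - (t : ℂ) * Complex.I) * Lb)).re = -(σ' * La + σ' * Lb) := by
    simp [hs]; try ring
  have him : (-(s * La + ((σ' : ℂ) - (t : ℂ) * Complex.I) * Lb)).im = t * Lb - t * La := by
    simp [hs]; try ring
  rw [hre, him]
  have hrp : ∀ (n : ℕ), (0:ℝ) < n → Real.exp (-(σ' * Real.log n)) = ((n:ℝ) ^ σ')⁻¹ := by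
    intro n hn
    rw [Real.rpow_def_of_pos hn, ← Real.exp_neg]
    ring_nf
  have hcos : Real.cos (t * Lb - t * La) = Real.cos (t * Real.log (((1+a:ℕ):ℝ)/((1+b:ℕ):ℝ))) := by
    rw [Real.log_div (ne_of_gt hpos) (ne_of_gt hpos'), ← Real.cos_neg]
    ring_nf
    congr 1; simp only [La, Lb]; ring
  rw [hcos, show -(σ' * La + σ' * Lb) = -(σ' * La) + -(σ' * Lb) by ring, Real.exp_add,
    hrp _ hpos, hrp _ hpos']
  field_simp

private lemma re_symm (z w : ℂ) : (z * (starRingEnd ℂ) w).re = (w * (starRingEnd ℂ) z).re := by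
  simp [Complex.mul_re, Complex.conj_re, Complex.conj_im]; ring

theorem double_sum_tendsto_of_eta_zero_right (σ' t : ℝ) (h0 : 1 / 2 < σ') (h1 : σ' < 1)
    (heta : Tendsto (fun N : ℕ => ∑ n ∈ Finset.Icc 1 N,
        (-1 : ℂ) ^ (n - 1) / (n : ℂ) ^ ((σ' : ℂ) + (t : ℂ) * Complex.I))
      atTop (nhds 0)) :
    Tendsto (fun N : ℕ => ∑ p ∈ (Finset.Icc 1 N ×ˢ Finset.Icc 1 N).filter (fun p => p.1 < p.2),
        (-1 : ℝ) ^ (p.1 + p.2) * Real.cos (t * Real.log ((p.1 : ℝ) / (p.2 : ℝ))) /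
          ((p.1 : ℝ) ^ σ' * (p.2 : ℝ) ^ σ'))
      atTop (nhds (-(∑' k : ℕ, 1 / ((k : ℝ) + 1) ^ (2 * σ')) / 2)) := by
  set a : ℕ → ℂ := fun n => (-1 : ℂ) ^ (n - 1) / (n : ℂ) ^ ((σ' : ℂ) + (t : ℂ) * Complex.I) with ha
  set F : ℕ × ℕ → ℝ := fun p => (a p.1 * (starRingEnd ℂ) (a p.2)).re with hF
  set G : ℕ × ℕ → ℝ := fun p =>
    (-1 : ℝ) ^ (p.1 + p.2) * Real.cos (t * Real.log ((p.1 : ℝ) / (p.2 : ℝ))) /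
      ((p.1 : ℝ) ^ σ' * (p.2 : ℝ) ^ σ') with hG
  set S : ℕ → ℝ := fun N =>
    ∑ p ∈ (Finset.Icc 1 N ×ˢ Finset.Icc 1 N).filter (fun p => p.1 < p.2), G p with hS
  set D : ℕ → ℝ := fun N => ∑ k ∈ Finset.Icc 1 N, 1 / (k:ℝ) ^ (2 * σ') with hD
  set C : ℝ := ∑' k : ℕ, 1 / ((k : ℝ) + 1) ^ (2 * σ') with hC
  -- F equals G on pairs with positive entries
  have hFG : ∀ p : ℕ × ℕ, 1 ≤ p.1 → 1 ≤ p.2 → F p = G p := fun p hp1 hp2 =>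
    re_term σ' t p.1 p.2 hp1 hp2
  -- main identity
  have hid : ∀ N : ℕ, Complex.normSq (∑ n ∈ Finset.Icc 1 N, a n) = D N + 2 * S N := by
    intro N
    set P := Finset.Icc 1 N ×ˢ Finset.Icc 1 N with hP
    have h1 : Complex.normSq (∑ n ∈ Finset.Icc 1 N, a n) = ∑ p ∈ P, F p := by
      have hm := Complex.mul_conj (∑ n ∈ Finset.Icc 1 N, a n)
      have h2 : (Complex.normSq (∑ n ∈ Finset.Icc 1 N, a n) : ℝ)
          = ((∑ n ∈ Finset.Icc 1 N, a n) * (starRingEnd ℂ) (∑ n ∈ Finset.Icc 1 N, a n)).re := by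
        rw [hm, Complex.ofReal_re]
      rw [h2, map_sum, Finset.sum_mul_sum]
      rw [Complex.re_sum]
      simp only [Complex.re_sum]
      rw [hP, Finset.sum_product]
    -- split the square
    have hsplit1 := Finset.sum_filter_add_sum_filter_not P (fun p => p.1 < p.2) F
    have hsplit2 := Finset.sum_filter_add_sum_filter_not
      (P.filter (fun p => ¬ p.1 < p.2)) (fun p => p.2 < p.1) F
    have hff1 : (P.filter (fun p => ¬ p.1 < p.2)).filter (fun p => p.2 < p.1)
        = P.filter (fun p => p.2 < p.1) := by
      rw [Finset.filter_filter]
      apply Finset.filter_congr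
      intro p _
      constructor
      · rintro ⟨_, h⟩; exact h
      · intro h; exact ⟨by omega, h⟩
    have hff2 : (P.filter (fun p => ¬ p.1 < p.2)).filter (fun p => ¬ p.2 < p.1)
        = P.filter (fun p => p.1 = p.2) := by
      rw [Finset.filter_filter]
      apply Finset.filter_congr
      intro p _
      constructor
      · rintro ⟨h1', h2'⟩; omega
      · intro h; omega
    -- swap symmetry
    have hswap : ∑ p ∈ P.filter (fun p => p.2 < p.1), F p
        = ∑ p ∈ P.filter (fun p => p.1 < p.2), F p := by
      apply Finset.sum_nbij' (i := Prod.swap) (j := Prod.swap)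
      · intro p hp
        simp only [hP, Finset.mem_filter, Finset.mem_product] at hp ⊢
        exact ⟨⟨hp.1.2, hp.1.1⟩, hp.2⟩
      · intro p hp
        simp only [hP, Finset.mem_filter, Finset.mem_product] at hp ⊢
        exact ⟨⟨hp.1.2, hp.1.1⟩, hp.2⟩
      · intro p _; simp
      · intro p _; simp
      · intro p _
        exact re_symm (a p.1) (a p.2)
    -- diagonal
    have hdiag : ∑ p ∈ P.filter (fun p => p.1 = p.2), F p = D N := by
      rw [hD]
      apply Finset.sum_nbij' (i := fun p => p.1) (j := fun k => (k, k))
      · intro p hp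
        simp only [hP, Finset.mem_filter, Finset.mem_product] at hp ⊢
        exact hp.1.1
      · intro k hk
        exact Finset.mem_filter.mpr ⟨Finset.mem_product.mpr ⟨hk, hk⟩, rfl⟩
      · intro p hp
        simp only [hP, Finset.mem_filter] at hp
        exact Prod.ext rfl hp.2
      · intro k _; rfl
      · intro p hp
        simp only [hP, Finset.mem_filter, Finset.mem_product, Finset.mem_Icc] at hp
        obtain ⟨⟨⟨hp1, _⟩, _⟩, hpe⟩ := hp
        rw [hFG p hp1 (hpe ▸ hp1), hG]
        simp only
        have hppos : (0:ℝ) < (p.1 : ℝ) := by exact_mod_cast Nat.lt_of_lt_of_le Nat.zero_lt_one hp1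
        rw [← hpe, div_self (ne_of_gt hppos), Real.log_one, mul_zero, Real.cos_zero,
          ← Real.rpow_add hppos, show p.1 + p.1 = 2 * p.1 by ring, pow_mul, neg_one_sq, one_pow,
          show σ' + σ' = 2 * σ' by ring]
        rw [one_mul]
    -- the strict part equals S N via hFG
    have hSN : ∑ p ∈ P.filter (fun p => p.1 < p.2), F p = S N := by
      rw [hS]
      apply Finset.sum_congr rfl
      intro p hp
      simp only [hP, Finset.mem_filter, Finset.mem_product, Finset.mem_Icc] at hp
      exact hFG p hp.1.1.1 hp.1.2.1
    rw [h1, ← hsplit1, ← hsplit2, hff1, hff2, hswap, hdiag, hSN]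
    ring
  -- limit of normSq term
  have hnorm : Tendsto (fun N => Complex.normSq (∑ n ∈ Finset.Icc 1 N, a n)) atTop (nhds 0) := by
    have := (Complex.continuous_normSq.tendsto 0).comp heta
    rw [map_zero] at this
    exact this
  -- limit of diagonal term
  have hsum : Summable (fun k : ℕ => 1 / ((k : ℝ) + 1) ^ (2 * σ')) := by
    have h2σ : 1 < 2 * σ' := by linarith
    have := (Real.summable_one_div_nat_rpow (p := 2 * σ')).mpr h2σ
    have h' := (summable_nat_add_iff 1).mpr this
    apply h'.congr
    intro k
    push_cast
    norm_num
  have hDlim : Tendsto D atTop (nhds C) := by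
    have hts := hsum.hasSum.tendsto_sum_nat
    apply hts.congr
    intro N
    simp only [hD]
    rw [show Finset.Icc 1 N = Finset.Ico 1 (N+1) from (Finset.Ico_add_one_right_eq_Icc ..).symm,
      Finset.sum_Ico_eq_sum_range]
    simp only [Nat.add_sub_cancel]
    apply Finset.sum_congr rfl
    intro i _
    push_cast
    rw [add_comm 1 (i:ℝ)]
  -- conclude
  have hfinal : Tendsto S atTop (nhds (-C / 2)) := by
    have h := (hnorm.sub hDlim).div_const 2
    rw [show (0 - C) / 2 = -C / 2 by ring] at h
    apply h.congr
    intro N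
    rw [hid N]
    ring
  exact hfinal
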